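/- Let X be an m×m complex matrix with X·Xᴴ + Xᴴ·X ≤ I_m. Then for every n ∈ ℕ and every n×n complex matrix B with B·Bᴴ + Bᴴ·B ≤ I_n, the matrix I_n ⊗ I_m + B ⊗ X + Bᴴ ⊗ Xᴴ is positive semidefinite. (Equivalently: every m×m matrix X with X·Xᴴ + Xᴴ·X ≤ I_m belongs to the m-th matricial range W_m(J₃) of the 3×3 Jordan block J₃.) -/

import Mathlib

open Matrix Kronecker
open scoped ComplexOrder

private lemma kron_conjTranspose {n m : ℕ} (A : Matrix (Fin n) (Fin n) ℂ)
    (C : Matrix (Fin m) (Fin m) ℂ) : (A ⊗ₖ C)ᴴ = Aᴴ ⊗ₖ Cᴴ := by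
  ext ⟨i, j⟩ ⟨k, l⟩
  simp [conjTranspose_apply, kroneckerMap_apply, mul_comm]

private lemma kron_sub_one {n m : ℕ} (A A' : Matrix (Fin n) (Fin n) ℂ) :
    (A - A') ⊗ₖ (1 : Matrix (Fin m) (Fin m) ℂ) = A ⊗ₖ 1 - A' ⊗ₖ 1 := by
  ext ⟨i, j⟩ ⟨k, l⟩
  simp [kroneckerMap_apply, sub_mul]

private lemma one_kron_sub {n m : ℕ} (C C' : Matrix (Fin m) (Fin m) ℂ) :
    (1 : Matrix (Fin n) (Fin n) ℂ) ⊗ₖ (C - C') = 1 ⊗ₖ C - 1 ⊗ₖ C' := by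
  ext ⟨i, j⟩ ⟨k, l⟩
  simp [kroneckerMap_apply, mul_sub]

private lemma kron_one_psd {n m : ℕ} {C : Matrix (Fin n) (Fin n) ℂ} (hC : C.PosSemidef) :
    (C ⊗ₖ (1 : Matrix (Fin m) (Fin m) ℂ)).PosSemidef := by
  exact hC.kronecker PosSemidef.one

private lemma one_kron_psd {n m : ℕ} {D : Matrix (Fin m) (Fin m) ℂ} (hD : D.PosSemidef) :
    ((1 : Matrix (Fin n) (Fin n) ℂ) ⊗ₖ D).PosSemidef := by
  exact PosSemidef.one.kronecker hD

theorem matricial_range_J3_containment {m : ℕ} (X : Matrix (Fin m) (Fin m) ℂ)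
    (hX : ((1 : Matrix (Fin m) (Fin m) ℂ) - (X * Xᴴ + Xᴴ * X)).PosSemidef) :
    ∀ (n : ℕ) (B : Matrix (Fin n) (Fin n) ℂ),
      ((1 : Matrix (Fin n) (Fin n) ℂ) - (B * Bᴴ + Bᴴ * B)).PosSemidef →
      ((1 : Matrix (Fin n) (Fin n) ℂ) ⊗ₖ (1 : Matrix (Fin m) (Fin m) ℂ)
          + B ⊗ₖ X + Bᴴ ⊗ₖ Xᴴ).PosSemidef := by
  intro n B hB
  refine posSemidef_iff_dotProduct_mulVec.mpr ⟨?_, ?_⟩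
  · simp only [conjTranspose_add, kron_conjTranspose, conjTranspose_one,
      conjTranspose_conjTranspose, Matrix.IsHermitian]
    abel
  · intro v
    -- abbreviations
    set a1 : Fin n × Fin m → ℂ := (Bᴴ ⊗ₖ (1 : Matrix (Fin m) (Fin m) ℂ)) *ᵥ v with ha1
    set b1 : Fin n × Fin m → ℂ := ((1 : Matrix (Fin n) (Fin n) ℂ) ⊗ₖ X) *ᵥ v with hb1
    set a2 : Fin n × Fin m → ℂ := ((1 : Matrix (Fin n) (Fin n) ℂ) ⊗ₖ Xᴴ) *ᵥ v with ha2
    set b2 : Fin n × Fin m → ℂ := (B ⊗ₖ (1 : Matrix (Fin m) (Fin m) ℂ)) *ᵥ v with hb2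
    -- generic: star (A *ᵥ v) ⬝ᵥ w = star v ⬝ᵥ (Aᴴ *ᵥ w)
    have key : ∀ (A : Matrix (Fin n × Fin m) (Fin n × Fin m) ℂ) (w : Fin n × Fin m → ℂ),
        star (A *ᵥ v) ⬝ᵥ w = star v ⬝ᵥ (Aᴴ *ᵥ w) := by
      intro A w
      rw [star_mulVec, ← dotProduct_mulVec]
    have hmul : ∀ (P Q : Matrix (Fin n × Fin m) (Fin n × Fin m) ℂ) (w : Fin n × Fin m → ℂ),
        P *ᵥ (Q *ᵥ w) = (P * Q) *ᵥ w := fun P Q w => (mulVec_mulVec w P Q)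
    -- the two cross terms
    set t : ℂ := star v ⬝ᵥ ((B ⊗ₖ X) *ᵥ v) with ht
    set t' : ℂ := star v ⬝ᵥ ((Bᴴ ⊗ₖ Xᴴ) *ᵥ v) with ht'
    -- cross-term identities
    have e11 : star a1 ⬝ᵥ b1 = t := by
      rw [ha1, key, kron_conjTranspose, conjTranspose_conjTranspose, conjTranspose_one,
        hb1, hmul, ← mul_kronecker_mul, Matrix.mul_one, Matrix.one_mul, ht]
    have e12 : star b1 ⬝ᵥ a1 = t' := by
      rw [hb1, key, kron_conjTranspose, conjTranspose_one, ha1, hmul,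
        ← mul_kronecker_mul, Matrix.mul_one, Matrix.one_mul, ht']
    have e21 : star a2 ⬝ᵥ b2 = t := by
      rw [ha2, key, kron_conjTranspose, conjTranspose_conjTranspose, conjTranspose_one,
        hb2, hmul, ← mul_kronecker_mul, Matrix.mul_one, Matrix.one_mul, ht]
    have e22 : star b2 ⬝ᵥ a2 = t' := by
      rw [hb2, key, kron_conjTranspose, conjTranspose_one, ha2, hmul,
        ← mul_kronecker_mul, Matrix.mul_one, Matrix.one_mul, ht']
    -- squared norms
    have f1 : star a1 ⬝ᵥ a1 = star v ⬝ᵥ (((B * Bᴴ) ⊗ₖ (1 : Matrix (Fin m) (Fin m) ℂ)) *ᵥ v) := by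
      rw [ha1, key, kron_conjTranspose, conjTranspose_conjTranspose, conjTranspose_one,
        hmul, ← mul_kronecker_mul, Matrix.mul_one]
    have f2 : star b1 ⬝ᵥ b1 = star v ⬝ᵥ (((1 : Matrix (Fin n) (Fin n) ℂ) ⊗ₖ (Xᴴ * X)) *ᵥ v) := by
      rw [hb1, key, kron_conjTranspose, conjTranspose_one, hmul,
        ← mul_kronecker_mul, Matrix.mul_one]
    have f3 : star a2 ⬝ᵥ a2 = star v ⬝ᵥ (((1 : Matrix (Fin n) (Fin n) ℂ) ⊗ₖ (X * Xᴴ)) *ᵥ v) := by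
      rw [ha2, key, kron_conjTranspose, conjTranspose_conjTranspose, conjTranspose_one,
        hmul, ← mul_kronecker_mul, Matrix.mul_one]
    have f4 : star b2 ⬝ᵥ b2 = star v ⬝ᵥ (((Bᴴ * B) ⊗ₖ (1 : Matrix (Fin m) (Fin m) ℂ)) *ᵥ v) := by
      rw [hb2, key, kron_conjTranspose, conjTranspose_one, hmul,
        ← mul_kronecker_mul, Matrix.mul_one]
    -- positivity of completed squares
    have h1 : (0:ℂ) ≤ star a1 ⬝ᵥ a1 + star a1 ⬝ᵥ b1 + (star b1 ⬝ᵥ a1 + star b1 ⬝ᵥ b1) := by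
      have := dotProduct_star_self_nonneg (a1 + b1)
      rwa [star_add, add_dotProduct, dotProduct_add, dotProduct_add] at this
    have h2 : (0:ℂ) ≤ star a2 ⬝ᵥ a2 + star a2 ⬝ᵥ b2 + (star b2 ⬝ᵥ a2 + star b2 ⬝ᵥ b2) := by
      have := dotProduct_star_self_nonneg (a2 + b2)
      rwa [star_add, add_dotProduct, dotProduct_add, dotProduct_add] at this
    -- bounds from hypotheses
    have hBv := (kron_one_psd (m := m) hB).dotProduct_mulVec_nonneg v
    rw [kron_sub_one, sub_mulVec, dotProduct_sub, one_kronecker_one, one_mulVec,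
      add_kronecker, add_mulVec, dotProduct_add] at hBv
    have hXv := (one_kron_psd (n := n) hX).dotProduct_mulVec_nonneg v
    rw [one_kron_sub, sub_mulVec, dotProduct_sub, one_kronecker_one, one_mulVec,
      kronecker_add, add_mulVec, dotProduct_add] at hXv
    -- individual nonnegativity (for imaginary parts)
    have g1 := dotProduct_star_self_nonneg a1
    have g2 := dotProduct_star_self_nonneg b1
    have g3 := dotProduct_star_self_nonneg a2
    have g4 := dotProduct_star_self_nonneg b2
    have gs := dotProduct_star_self_nonneg v
    -- goal
    rw [add_mulVec, add_mulVec, dotProduct_add, dotProduct_add, one_kronecker_one, one_mulVec,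
      ← ht, ← ht']
    rw [e11, e12, f1, f2] at h1
    rw [e21, e22, f3, f4] at h2
    rw [f1] at g1
    rw [f2] at g2
    rw [f3] at g3
    rw [f4] at g4
    rw [Complex.le_def] at *
    constructor
    · simp only [Complex.add_re, Complex.sub_re, Complex.zero_re] at *
      linarith [h1.1, h2.1, hBv.1, hXv.1]
    · simp only [Complex.add_im, Complex.sub_im, Complex.zero_im] at *
      linarith [h1.2, h2.2, hBv.2, hXv.2, g1.2, g2.2, g3.2, g4.2, gs.2]
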